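/- arXiv:1504.07326 — 5 statements merged into one kernel-verified Lean document; each statement's English description precedes it below -/
import Mathlib

section
/- For every r ∈ ℝ, the sum over all integers j of φ(r − j) equals 1 (the sum has only finitely many nonzero terms since φ vanishes outside [−2, 2]). This is the one-dimensional unity condition underlying the discrete delta function. -/
/-- The Peskin four-point kernel. -/
noncomputable def peskinPhi (r : ℝ) : ℝ :=
  if |r| ≤ 1 then (3 - 2 * |r| + Real.sqrt (1 + 4 * |r| - 4 * |r| ^ 2)) / 8
  else if |r| ≤ 2 then (5 - 2 * |r| - Real.sqrt (-7 + 12 * |r| - 4 * |r| ^ 2)) / 8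
  else 0

lemma peskinPhi_zero {x : ℝ} (h : 2 ≤ |x|) : peskinPhi x = 0 := by
  unfold peskinPhi
  rcases le_or_gt (|x|) 1 with h1 | h1
  · linarith
  rcases le_or_gt (|x|) 2 with h2 | h2
  · have hx : |x| = 2 := le_antisymm h2 h
    rw [if_neg (by linarith), if_pos h2, hx]
    have : (-7 + 12 * (2:ℝ) - 4 * 2 ^ 2) = 1 := by norm_num
    rw [this, Real.sqrt_one]; norm_num
  · rw [if_neg (by linarith), if_neg (by linarith)]

lemma peskinPhi_one {x : ℝ} (h0 : 0 ≤ x) (h1 : x ≤ 1) :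
    peskinPhi x = (3 - 2 * x + Real.sqrt (1 + 4 * x - 4 * x ^ 2)) / 8 := by
  unfold peskinPhi
  rw [abs_of_nonneg h0, if_pos h1]

lemma peskinPhi_two {x : ℝ} (h1 : 1 ≤ x) (h2 : x ≤ 2) :
    peskinPhi x = (5 - 2 * x - Real.sqrt (-7 + 12 * x - 4 * x ^ 2)) / 8 := by
  unfold peskinPhi
  rw [abs_of_nonneg (by linarith)]
  rcases le_or_gt x 1 with hx | hx
  · have hx1 : x = 1 := le_antisymm hx h1
    subst hx1
    rw [if_pos le_rfl]
    norm_num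
  · rw [if_neg (by linarith), if_pos h2]

lemma peskinPhi_neg (x : ℝ) : peskinPhi (-x) = peskinPhi x := by
  unfold peskinPhi; rw [abs_neg]

/-- One-dimensional unity condition: for every `r ∈ ℝ`, the sum over all integers `j`
of `φ(r − j)` equals `1`. -/
theorem peskinPhi_unity (r : ℝ) : ∑' j : ℤ, peskinPhi (r - j) = 1 := by
  set n : ℤ := ⌊r⌋ with hn
  set t : ℝ := r - n with ht
  have ht0 : 0 ≤ t := by simp [ht, hn, Int.floor_le]
  have ht1 : t < 1 := by
    have h := Int.lt_floor_add_one r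
    rw [ht, hn]; push_cast; linarith
  have key : ∀ j : ℤ, j ∉ ({n - 1, n, n + 1, n + 2} : Finset ℤ) →
      peskinPhi (r - j) = 0 := by
    intro j hj
    simp only [Finset.mem_insert, Finset.mem_singleton] at hj
    push_neg at hj
    obtain ⟨h1, h2, h3, h4⟩ := hj
    have : j ≤ n - 2 ∨ n + 3 ≤ j := by omega
    apply peskinPhi_zero
    rcases this with h | h
    · have : (j : ℝ) ≤ (n : ℝ) - 2 := by exact_mod_cast h
      have : 2 ≤ r - j := by simp only [ht] at ht0; linarith
      rw [abs_of_nonneg (by linarith)]; linarith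
    · have : (n : ℝ) + 3 ≤ (j : ℝ) := by exact_mod_cast h
      have : r - j ≤ -2 := by simp only [ht] at ht1; linarith
      rw [abs_of_nonpos (by linarith)]; linarith
  rw [tsum_eq_sum key]
  have hd1 : (n - 1 : ℤ) ∉ ({n, n + 1, n + 2} : Finset ℤ) := by simp; omega
  have hd2 : (n : ℤ) ∉ ({n + 1, n + 2} : Finset ℤ) := by simp
  have hd3 : (n + 1 : ℤ) ∉ ({n + 2} : Finset ℤ) := by simp
  rw [Finset.sum_insert hd1, Finset.sum_insert hd2, Finset.sum_insert hd3,
    Finset.sum_singleton]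
  have e1 : r - ((n : ℤ) - 1 : ℤ) = t + 1 := by push_cast [ht]; ring
  have e2 : r - (n : ℤ) = t := by rw [ht]
  have e3 : r - ((n : ℤ) + 1 : ℤ) = -(1 - t) := by push_cast [ht]; ring
  have e4 : r - ((n : ℤ) + 2 : ℤ) = -(2 - t) := by push_cast [ht]; ring
  rw [e1, e2, e3, e4, peskinPhi_neg, peskinPhi_neg]
  rw [peskinPhi_two (by linarith) (by linarith),
    peskinPhi_one ht0 (by linarith),
    peskinPhi_one (by linarith) (by linarith),
    peskinPhi_two (by linarith) (by linarith)]
  have a1 : -7 + 12 * (t + 1) - 4 * (t + 1) ^ 2 = 1 + 4 * t - 4 * t ^ 2 := by ring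
  have a2 : 1 + 4 * (1 - t) - 4 * (1 - t) ^ 2 = 1 + 4 * t - 4 * t ^ 2 := by ring
  have a3 : -7 + 12 * (2 - t) - 4 * (2 - t) ^ 2 = 1 + 4 * t - 4 * t ^ 2 := by ring
  rw [a1, a2, a3]
  ring
end

section
/- For every radial parameter ω > 0 and every X ∈ ℝ³, the smoothed delta function integrates to one: ∫_{ℝ³} δ̂(x − X, ω) dx = 1 (with respect to Lebesgue measure on ℝ³). -/
open MeasureTheory

/-- The smoothed Dirac delta function `δ̂(x, ω) = ω⁻³ φ(x₁/ω) φ(x₂/ω) φ(x₃/ω)`. -/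
noncomputable def deltaHat (x : Fin 3 → ℝ) (ω : ℝ) : ℝ :=
  ω⁻¹ ^ 3 * (peskinPhi (x 0 / ω) * peskinPhi (x 1 / ω) * peskinPhi (x 2 / ω))

lemma peskin_measurable : Measurable peskinPhi := by
  have c1 : Continuous fun r : ℝ => (3 - 2 * |r| + Real.sqrt (1 + 4 * |r| - 4 * |r| ^ 2)) / 8 := by
    fun_prop
  have c2 : Continuous fun r : ℝ => (5 - 2 * |r| - Real.sqrt (-7 + 12 * |r| - 4 * |r| ^ 2)) / 8 := by
    fun_prop
  exact Measurable.ite (measurableSet_le continuous_abs.measurable measurable_const) c1.measurable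
    (Measurable.ite (measurableSet_le continuous_abs.measurable measurable_const) c2.measurable
      measurable_const)

lemma sqrt9 : Real.sqrt 9 = 3 := by
  rw [show (9:ℝ) = 3 ^ 2 by norm_num, Real.sqrt_sq (by norm_num : (0:ℝ) ≤ 3)]

lemma peskin_abs_le (x : ℝ) : |peskinPhi x| ≤ 1 := by
  unfold peskinPhi
  have h0 : (0:ℝ) ≤ |x| := abs_nonneg x
  split_ifs with h1 h2
  · have hs : Real.sqrt (1 + 4 * |x| - 4 * |x| ^ 2) ≤ 3 := by
      calc Real.sqrt (1 + 4 * |x| - 4 * |x| ^ 2) ≤ Real.sqrt 9 :=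
            Real.sqrt_le_sqrt (by nlinarith)
        _ = 3 := sqrt9
    have hn := Real.sqrt_nonneg (1 + 4 * |x| - 4 * |x| ^ 2)
    rw [abs_le]; constructor <;> nlinarith
  · have hs : Real.sqrt (-7 + 12 * |x| - 4 * |x| ^ 2) ≤ 3 := by
      calc Real.sqrt (-7 + 12 * |x| - 4 * |x| ^ 2) ≤ Real.sqrt 9 :=
            Real.sqrt_le_sqrt (by nlinarith)
        _ = 3 := sqrt9
    have hn := Real.sqrt_nonneg (-7 + 12 * |x| - 4 * |x| ^ 2)
    rw [abs_le]; constructor <;> nlinarith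
  · simp

lemma peskin_zero {x : ℝ} (hx : x ∉ Set.Icc (-2:ℝ) 2) : peskinPhi x = 0 := by
  have h : ¬ |x| ≤ 2 := by
    simp only [Set.mem_Icc, not_and_or, not_le] at hx
    rw [not_le, lt_abs]
    rcases hx with h | h
    · right; linarith
    · left; exact h
  unfold peskinPhi
  rw [if_neg (fun h1 => h (h1.trans (by norm_num))), if_neg h]

lemma peskin_integrable : Integrable peskinPhi := by
  apply Integrable.mono' (g := (Set.Icc (-2:ℝ) 2).indicator fun _ => (1:ℝ))
  · rw [integrable_indicator_iff measurableSet_Icc]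
    refine integrableOn_const ?_ (by simp)
    rw [Real.volume_Icc]; norm_num
  · exact peskin_measurable.aestronglyMeasurable
  · refine Filter.Eventually.of_forall fun x => ?_
    by_cases hx : x ∈ Set.Icc (-2:ℝ) 2
    · rw [Set.indicator_of_mem hx]
      exact peskin_abs_le x
    · rw [Set.indicator_of_notMem hx]
      simp [peskin_zero hx]

lemma peskin_sum {x : ℝ} (h0 : 0 ≤ x) (h1 : x ≤ 1) :
    peskinPhi (x + (-2)) + peskinPhi (x + (-1)) + peskinPhi (x + 0) + peskinPhi (x + 1) = 1 := by
  rcases eq_or_lt_of_le h0 with h | hx0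
  · subst h; norm_num [peskinPhi, Real.sqrt_one]
  rcases eq_or_lt_of_le h1 with h | hx1
  · rw [h]; norm_num [peskinPhi, Real.sqrt_one]
  have a2 : |x + (-2)| = 2 - x := by rw [abs_of_nonpos (by linarith)]; ring
  have a1 : |x + (-1)| = 1 - x := by rw [abs_of_nonpos (by linarith)]; ring
  have a0 : |x + 0| = x := by rw [add_zero, abs_of_nonneg h0]
  have a3 : |x + 1| = x + 1 := abs_of_nonneg (by linarith)
  have e1 : (1 + 4 * (1 - x) - 4 * (1 - x) ^ 2) = 1 + 4 * x - 4 * x ^ 2 := by ring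
  have e2 : (-7 + 12 * (x + 1) - 4 * (x + 1) ^ 2) = 1 + 4 * x - 4 * x ^ 2 := by ring
  have e3 : (-7 + 12 * (2 - x) - 4 * (2 - x) ^ 2) = 1 + 4 * x - 4 * x ^ 2 := by ring
  unfold peskinPhi
  rw [a2, a1, a0, a3]
  split_ifs <;> try linarith
  rw [e1, e2, e3]; ring

lemma peskin_integral : (∫ x : ℝ, peskinPhi x) = 1 := by
  have hII : ∀ a b : ℝ, IntervalIntegrable peskinPhi volume a b :=
    fun a b => peskin_integrable.intervalIntegrable
  -- restrict to [-2, 2]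
  have h1 : (∫ x : ℝ, peskinPhi x) = ∫ x in Set.Icc (-2:ℝ) 2, peskinPhi x :=
    (setIntegral_eq_integral_of_forall_compl_eq_zero fun x hx => peskin_zero hx).symm
  rw [h1, MeasureTheory.integral_Icc_eq_integral_Ioc,
      ← intervalIntegral.integral_of_le (by norm_num : (-2:ℝ) ≤ 2)]
  have hsplit : (∫ x in (-2:ℝ)..2, peskinPhi x) =
      (∫ x in (-2:ℝ)..(-1), peskinPhi x) + (∫ x in (-1:ℝ)..0, peskinPhi x) +
      (∫ x in (0:ℝ)..1, peskinPhi x) + (∫ x in (1:ℝ)..2, peskinPhi x) := by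
    rw [intervalIntegral.integral_add_adjacent_intervals (hII _ _) (hII _ _),
        intervalIntegral.integral_add_adjacent_intervals (hII _ _) (hII _ _),
        intervalIntegral.integral_add_adjacent_intervals (hII _ _) (hII _ _)]
  rw [hsplit]
  have c2 : (∫ x in (0:ℝ)..1, peskinPhi (x + (-2))) = ∫ x in (-2:ℝ)..(-1), peskinPhi x := by
    rw [intervalIntegral.integral_comp_add_right peskinPhi (-2)]; norm_num
  have c1 : (∫ x in (0:ℝ)..1, peskinPhi (x + (-1))) = ∫ x in (-1:ℝ)..0, peskinPhi x := by
    rw [intervalIntegral.integral_comp_add_right peskinPhi (-1)]; norm_num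
  have c0 : (∫ x in (0:ℝ)..1, peskinPhi (x + 0)) = ∫ x in (0:ℝ)..1, peskinPhi x := by
    simp
  have c3 : (∫ x in (0:ℝ)..1, peskinPhi (x + 1)) = ∫ x in (1:ℝ)..2, peskinPhi x := by
    rw [intervalIntegral.integral_comp_add_right peskinPhi 1]; norm_num
  rw [← c0, ← c1, ← c2, ← c3]
  have hIc : ∀ c : ℝ, IntervalIntegrable (fun x => peskinPhi (x + c)) volume 0 1 := by
    intro c
    have := (hII (0 + c) (1 + c)).comp_add_right c
    simpa using this
  rw [← intervalIntegral.integral_add (hIc (-2)) (hIc (-1)),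
      ← intervalIntegral.integral_add ((hIc (-2)).add (hIc (-1))) (hIc 0),
      ← intervalIntegral.integral_add (((hIc (-2)).add (hIc (-1))).add (hIc 0)) (hIc 1)]
  rw [intervalIntegral.integral_congr (g := fun _ => (1:ℝ))
      (fun x hx => by
        rw [Set.uIcc_of_le (by norm_num : (0:ℝ) ≤ 1)] at hx
        exact peskin_sum hx.1 hx.2)]
  simp

lemma peskin_scaled_integral (ω : ℝ) (hω : 0 < ω) (c : ℝ) :
    (∫ t : ℝ, ω⁻¹ * peskinPhi ((t - c) / ω)) = 1 := by
  rw [MeasureTheory.integral_const_mul]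
  rw [show (fun t : ℝ => peskinPhi ((t - c) / ω)) =
      (fun t : ℝ => (fun s : ℝ => peskinPhi (s / ω)) (t - c)) from rfl]
  rw [integral_sub_right_eq_self (fun s : ℝ => peskinPhi (s / ω)) c]
  rw [MeasureTheory.Measure.integral_comp_div peskinPhi ω, peskin_integral]
  rw [abs_of_pos hω]
  simp [ne_of_gt hω]

/-- For every radial parameter `ω > 0` and every `X ∈ ℝ³`, the smoothed delta function
integrates to one: `∫_{ℝ³} δ̂(x − X, ω) dx = 1` (with respect to Lebesgue measure). -/
theorem deltaHat_integral (ω : ℝ) (hω : 0 < ω) (X : Fin 3 → ℝ) :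
    (∫ x : Fin 3 → ℝ, deltaHat (x - X) ω) = 1 := by
  have hrw : ∀ x : Fin 3 → ℝ, deltaHat (x - X) ω =
      ∏ i : Fin 3, (fun t : ℝ => ω⁻¹ * peskinPhi ((t - X i) / ω)) (x i) := by
    intro x
    simp only [deltaHat, Fin.prod_univ_three, Pi.sub_apply]
    ring
  simp_rw [hrw]
  rw [MeasureTheory.volume_pi]
  rw [MeasureTheory.integral_fintype_prod_eq_prod (ι := Fin 3)
      (fun i (t : ℝ) => ω⁻¹ * peskinPhi ((t - X i) / ω))]
  simp [peskin_scaled_integral ω hω]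
end

section
/- Approximate first-moment condition in the fine-grid limit: fix a radial parameter ω > 0 and a point X ∈ ℝ³. Then the vector-valued grid sums M(h) = Σ_{v ∈ ℤ³} (h·v − X)·δ̂(h·v − X, ω)·h³ converge to the zero vector of ℝ³ as h → 0⁺. -/
open Filter

lemma sqrt_le_two' {t : ℝ} (h : t ≤ 4) : Real.sqrt t ≤ 2 := by
  have : Real.sqrt t ≤ Real.sqrt 4 := Real.sqrt_le_sqrt h
  simpa [show (4:ℝ) = 2^2 by norm_num, Real.sqrt_sq] using this

lemma peskinPhi_even (r : ℝ) : peskinPhi (-r) = peskinPhi r := by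
  simp [peskinPhi, abs_neg]

lemma peskinPhi_eq_zero {r : ℝ} (hr : 2 < |r|) : peskinPhi r = 0 := by
  rw [peskinPhi, if_neg (by linarith), if_neg (by linarith)]

lemma abs_peskinPhi_le_one (r : ℝ) : |peskinPhi r| ≤ 1 := by
  have h0 : (0:ℝ) ≤ |r| := abs_nonneg r
  rw [peskinPhi]
  split_ifs with h1 h2
  · have hs0 : 0 ≤ Real.sqrt (1 + 4 * |r| - 4 * |r| ^ 2) := Real.sqrt_nonneg _
    have hs2 : Real.sqrt (1 + 4 * |r| - 4 * |r| ^ 2) ≤ 2 := sqrt_le_two' (by nlinarith)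
    rw [abs_le]; constructor <;> nlinarith
  · have hs0 : 0 ≤ Real.sqrt (-7 + 12 * |r| - 4 * |r| ^ 2) := Real.sqrt_nonneg _
    have hs2 : Real.sqrt (-7 + 12 * |r| - 4 * |r| ^ 2) ≤ 2 := sqrt_le_two' (by nlinarith)
    rw [abs_le]; constructor <;> nlinarith
  · simp

lemma continuous_peskinPhi : Continuous peskinPhi := by
  have c1 : Continuous fun r : ℝ => (3 - 2 * |r| + Real.sqrt (1 + 4 * |r| - 4 * |r| ^ 2)) / 8 := by
    fun_prop
  have c2 : Continuous fun r : ℝ => (5 - 2 * |r| - Real.sqrt (-7 + 12 * |r| - 4 * |r| ^ 2)) / 8 := by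
    fun_prop
  have hset2 : {r : ℝ | |r| ≤ 2} = Set.Icc (-2) 2 := by ext r; simp [abs_le]
  have cinner : Continuous fun r : ℝ => if |r| ≤ 2 then
      (5 - 2 * |r| - Real.sqrt (-7 + 12 * |r| - 4 * |r| ^ 2)) / 8 else 0 := by
    apply Continuous.if _ c2 continuous_const
    intro a ha
    rw [hset2, frontier_Icc (by norm_num)] at ha
    have : |a| = 2 := by
      have h' : a = -2 ∨ a = 2 := by simpa using ha
      rcases h' with rfl | rfl <;> norm_num
    rw [this]
    norm_num [show (-7:ℝ) + 12*2 - 4*2^2 = 1 by norm_num, Real.sqrt_one]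
  have hset1 : {r : ℝ | |r| ≤ 1} = Set.Icc (-1) 1 := by ext r; simp [abs_le]
  unfold peskinPhi
  apply Continuous.if _ c1 cinner
  intro a ha
  rw [hset1, frontier_Icc (by norm_num)] at ha
  have h1 : |a| = 1 := by
    have h' : a = -1 ∨ a = 1 := by simpa using ha
    rcases h' with rfl | rfl <;> norm_num
  rw [h1, if_pos (by norm_num : (1:ℝ) ≤ 2)]
  norm_num [show (1:ℝ) + 4*1 - 4*1^2 = 1 by norm_num,
    show (-7:ℝ) + 12*1 - 4*1^2 = 1 by norm_num, Real.sqrt_one]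

lemma deltaHat_eq_zero {x : Fin 3 → ℝ} {ω : ℝ} (j : Fin 3)
    (hj : peskinPhi (x j / ω) = 0) : deltaHat x ω = 0 := by
  fin_cases j <;> simp_all [deltaHat]

lemma odd_pair_sum_bound (ω a : ℝ) {ε₀ δ₀ h : ℝ}
    (hmod : ∀ u v : ℝ, |u - v| < δ₀ →
      |u * peskinPhi (u / ω) - v * peskinPhi (v / ω)| < ε₀)
    (hh : 0 < h) (hhδ : h < δ₀) {N : ℤ} (hN : 0 ≤ N) :
    |∑ k ∈ Finset.Icc (⌊a / h⌋ + 1 - N) (⌊a / h⌋ + N),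
        (h * k - a) * peskinPhi ((h * k - a) / ω)| ≤ N * ε₀ := by
  set n := ⌊a / h⌋ with hn
  set g : ℝ → ℝ := fun x => x * peskinPhi (x / ω) with hg
  have godd : ∀ x : ℝ, g (-x) = - g x := by
    intro x; simp [hg, neg_div, peskinPhi_even]
  have hna : h * n ≤ a := by
    have := Int.floor_le (a / h)
    calc h * n ≤ h * (a / h) := by exact mul_le_mul_of_nonneg_left this hh.le
    _ = a := by field_simp
  have hna' : a < h * n + h := by
    have h2 : a / h < (n : ℝ) + 1 := Int.lt_floor_add_one (a / h)
    calc a = h * (a / h) := by field_simp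
    _ < h * ((n : ℝ) + 1) := by exact mul_lt_mul_of_pos_left h2 hh
    _ = h * n + h := by ring
  have hsplit : Finset.Icc (n + 1 - N) (n + N)
      = Finset.Icc (n + 1 - N) n ∪ Finset.Icc (n + 1) (n + N) := by
    ext k; simp only [Finset.mem_Icc, Finset.mem_union]; omega
  have hdisj : Disjoint (Finset.Icc (n + 1 - N) n) (Finset.Icc (n + 1) (n + N)) := by
    rw [Finset.disjoint_left]; intro k hk hk'
    simp only [Finset.mem_Icc] at hk hk'; omega
  have hre : ∑ k ∈ Finset.Icc (n + 1 - N) n, g (h * k - a)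
      = ∑ k ∈ Finset.Icc (n + 1) (n + N), g (h * (2 * n + 1 - k : ℤ) - a) := by
    apply Finset.sum_bij' (fun k _ => 2 * n + 1 - k) (fun k _ => 2 * n + 1 - k)
    · intro k hk; simp only [Finset.mem_Icc] at hk ⊢; omega
    · intro k hk; simp only [Finset.mem_Icc] at hk ⊢; omega
    · intro k hk; omega
    · intro k hk; omega
    · intro k hk; norm_num
  have htotal : ∑ k ∈ Finset.Icc (n + 1 - N) (n + N), g (h * k - a)
      = ∑ k ∈ Finset.Icc (n + 1) (n + N),
          (g (h * (2 * n + 1 - k : ℤ) - a) + g (h * k - a)) := by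
    rw [hsplit, Finset.sum_union hdisj, hre, ← Finset.sum_add_distrib]
  have hterm : ∀ k ∈ Finset.Icc (n + 1) (n + N),
      |g (h * (2 * n + 1 - k : ℤ) - a) + g (h * k - a)| ≤ ε₀ := by
    intro k _
    set u : ℝ := h * k - a with hu
    set s : ℝ := h * (2 * n + 1) - 2 * a with hs
    have harg : (h * (2 * n + 1 - k : ℤ) - a) = -(u - s) := by
      push_cast; ring
    rw [harg, godd]
    have hsb : |u - (u - s)| < δ₀ := by
      have h1 : |s| ≤ h := by
        rw [abs_le]; constructor <;> [skip; skip] <;> push_cast [hs] <;> nlinarith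
      have : |u - (u - s)| = |s| := by ring_nf
      rw [this]; linarith
    have := hmod u (u - s) hsb
    calc |-(g (u - s)) + g u| = |u * peskinPhi (u / ω) - (u - s) * peskinPhi ((u - s) / ω)| := by
          rw [hg]; ring_nf
    _ ≤ ε₀ := (this).le
  calc |∑ k ∈ Finset.Icc (n + 1 - N) (n + N), g (h * k - a)|
      = |∑ k ∈ Finset.Icc (n + 1) (n + N),
          (g (h * (2 * n + 1 - k : ℤ) - a) + g (h * k - a))| := by rw [htotal]
  _ ≤ ∑ k ∈ Finset.Icc (n + 1) (n + N),
        |g (h * (2 * n + 1 - k : ℤ) - a) + g (h * k - a)| := Finset.abs_sum_le_sum_abs _ _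
  _ ≤ (Finset.Icc (n + 1) (n + N)).card • ε₀ := Finset.sum_le_card_nsmul _ _ _ hterm
  _ = N * ε₀ := by
      rw [Int.card_Icc, nsmul_eq_mul]
      congr 1
      rw [show n + N + 1 - (n + 1) = N by ring]
      norm_cast
      omega

/-- Approximate first-moment condition in the fine-grid limit: for fixed `ω > 0` and
`X ∈ ℝ³`, the vector-valued grid sums
`M(h) = Σ_{v ∈ ℤ³} (h·v − X)·δ̂(h·v − X, ω)·h³` converge to the zero vector of `ℝ³`
as `h → 0⁺`. -/
theorem deltaHat_firstMoment_limit (ω : ℝ) (hω : 0 < ω) (X : Fin 3 → ℝ) :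
    Tendsto (fun h : ℝ =>
        ∑' v : Fin 3 → ℤ,
          (deltaHat (fun i => h * (v i : ℝ) - X i) ω * h ^ 3) •
            (fun i => h * (v i : ℝ) - X i : Fin 3 → ℝ))
      (nhdsWithin 0 (Set.Ioi 0)) (nhds 0) := by
  rw [NormedAddCommGroup.tendsto_nhds_zero]
  intro ε hε
  set ε' : ℝ := ε / 257 with hε'def
  have hε' : 0 < ε' := by positivity
  -- uniform continuity of x ↦ x φ(x/ω)
  have gcont : Continuous fun x : ℝ => x * peskinPhi (x / ω) :=
    continuous_id.mul (continuous_peskinPhi.comp (continuous_id.div_const ω))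
  have gzero : ∀ x : ℝ, x ∉ Set.Icc (-(2*ω)) (2*ω) → x * peskinPhi (x / ω) = 0 := by
    intro x hx
    have h2 : 2 < |x / ω| := by
      rw [abs_div, abs_of_pos hω, lt_div_iff₀ hω]
      simp only [Set.mem_Icc, not_and_or, not_le] at hx
      rcases hx with hx | hx
      · rw [abs_of_neg (by linarith)]; linarith
      · rw [abs_of_pos (by linarith)]; linarith
    rw [peskinPhi_eq_zero h2, mul_zero]
  have hcs : HasCompactSupport fun x : ℝ => x * peskinPhi (x / ω) :=
    HasCompactSupport.intro isCompact_Icc gzero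
  have huc := hcs.uniformContinuous_of_continuous gcont
  rw [Metric.uniformContinuous_iff] at huc
  obtain ⟨δ₀, hδ₀, hmod0⟩ := huc ε' hε'
  have hmod : ∀ u v : ℝ, |u - v| < δ₀ →
      |u * peskinPhi (u / ω) - v * peskinPhi (v / ω)| < ε' := by
    intro u v huv
    have := hmod0 (show dist u v < δ₀ by rwa [Real.dist_eq])
    rwa [Real.dist_eq] at this
  filter_upwards [Ioo_mem_nhdsGT_of_mem
    (Set.left_mem_Ico.mpr (show (0:ℝ) < min δ₀ ω by positivity))] with h hmem
  obtain ⟨hh0, hhm⟩ := hmem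
  have hhδ : h < δ₀ := lt_of_lt_of_le hhm (min_le_left _ _)
  have hhω : h < ω := lt_of_lt_of_le hhm (min_le_right _ _)
  -- the cutoff
  set N : ℤ := ⌊2 * ω / h⌋ + 2 with hNdef
  have hN0 : 0 ≤ N := by
    have : 0 ≤ ⌊2 * ω / h⌋ := Int.floor_nonneg.mpr (by positivity)
    omega
  have hNu : h * (N : ℝ) ≤ 2 * ω + 2 * h := by
    have h1 : (⌊2 * ω / h⌋ : ℝ) ≤ 2 * ω / h := Int.floor_le _
    have h2 : (N : ℝ) ≤ 2 * ω / h + 2 := by rw [hNdef]; push_cast; linarith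
    calc h * (N : ℝ) ≤ h * (2 * ω / h + 2) := mul_le_mul_of_nonneg_left h2 hh0.le
    _ = 2 * ω + 2 * h := by field_simp
  have hNl : 2 * ω + h ≤ h * (N : ℝ) := by
    have h1 : 2 * ω / h < (⌊2 * ω / h⌋ : ℝ) + 1 := Int.lt_floor_add_one _
    have h2 : 2 * ω / h + 1 ≤ (N : ℝ) := by rw [hNdef]; push_cast; linarith
    calc 2 * ω + h = h * (2 * ω / h + 1) := by field_simp
    _ ≤ h * (N : ℝ) := mul_le_mul_of_nonneg_left h2 hh0.le
  set n : Fin 3 → ℤ := fun j => ⌊X j / h⌋ with hndef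
  have hfl : ∀ j : Fin 3, h * (n j : ℝ) ≤ X j ∧ X j < h * (n j : ℝ) + h := by
    intro j
    constructor
    · calc h * (n j : ℝ) ≤ h * (X j / h) :=
          mul_le_mul_of_nonneg_left (Int.floor_le _) hh0.le
      _ = X j := by field_simp
    · calc X j = h * (X j / h) := by field_simp
      _ < h * ((n j : ℝ) + 1) := mul_lt_mul_of_pos_left (Int.lt_floor_add_one _) hh0
      _ = h * (n j : ℝ) + h := by ring
  set K : Fin 3 → Finset ℤ := fun j => Finset.Icc (n j + 1 - N) (n j + N) with hKdef
  -- vanishing off the box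
  have hvanish : ∀ v : Fin 3 → ℤ, v ∉ Fintype.piFinset K →
      (deltaHat (fun i => h * (v i : ℝ) - X i) ω * h ^ 3) •
        (fun i => h * (v i : ℝ) - X i : Fin 3 → ℝ) = 0 := by
    intro v hv
    rw [Fintype.mem_piFinset] at hv
    push_neg at hv
    obtain ⟨j, hj⟩ := hv
    have hcases : v j ≤ n j - N ∨ n j + N + 1 ≤ v j := by
      simp only [hKdef, Finset.mem_Icc, not_and_or, not_le] at hj
      omega
    have habs : 2 * ω < |h * (v j : ℝ) - X j| := by
      rcases hcases with hc | hc
      · have hcast : (v j : ℝ) ≤ (n j : ℝ) - (N : ℝ) := by exact_mod_cast hc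
        have hm : h * (v j : ℝ) ≤ h * ((n j : ℝ) - (N : ℝ)) :=
          mul_le_mul_of_nonneg_left hcast hh0.le
        rw [lt_abs]; right
        have := (hfl j).1
        nlinarith
      · have hcast : (n j : ℝ) + (N : ℝ) + 1 ≤ (v j : ℝ) := by exact_mod_cast hc
        have hm : h * ((n j : ℝ) + (N : ℝ) + 1) ≤ h * (v j : ℝ) :=
          mul_le_mul_of_nonneg_left hcast hh0.le
        rw [lt_abs]; left
        have := (hfl j).2
        nlinarith
    have hphi : peskinPhi ((h * (v j : ℝ) - X j) / ω) = 0 := by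
      apply peskinPhi_eq_zero
      rw [abs_div, abs_of_pos hω, lt_div_iff₀ hω]
      linarith
    have hd0 : deltaHat (fun i => h * (v i : ℝ) - X i) ω = 0 :=
      deltaHat_eq_zero j hphi
    rw [hd0, zero_mul, zero_smul]
  rw [tsum_eq_sum hvanish, pi_norm_lt_iff hε]
  intro i
  rw [Finset.sum_apply]
  simp only [Pi.smul_apply, smul_eq_mul]
  have hsummand : ∀ v : Fin 3 → ℤ,
      deltaHat (fun i' => h * (v i' : ℝ) - X i') ω * h ^ 3 * (h * (v i : ℝ) - X i)
        = ω⁻¹ ^ 3 * ∏ j, (if j = i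
            then h * ((h * (v j : ℝ) - X j) * peskinPhi ((h * (v j : ℝ) - X j) / ω))
            else h * peskinPhi ((h * (v j : ℝ) - X j) / ω)) := by
    intro v
    have step1 : ∀ j : Fin 3, (if j = i
          then h * ((h * (v j : ℝ) - X j) * peskinPhi ((h * (v j : ℝ) - X j) / ω))
          else h * peskinPhi ((h * (v j : ℝ) - X j) / ω))
        = (if j = i then (h * (v j : ℝ) - X j) else 1)
            * (h * peskinPhi ((h * (v j : ℝ) - X j) / ω)) := by
      intro j; split_ifs <;> ring
    rw [Finset.prod_congr rfl (fun j _ => step1 j), Finset.prod_mul_distrib,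
      Finset.prod_ite_eq']
    simp only [Finset.mem_univ, if_true]
    simp only [deltaHat]
    rw [Fin.prod_univ_three]
    ring
  rw [Finset.sum_congr rfl fun v _ => hsummand v, ← Finset.mul_sum,
    ← Finset.prod_univ_sum K (fun j k => if j = i
        then h * ((h * (k : ℝ) - X j) * peskinPhi ((h * (k : ℝ) - X j) / ω))
        else h * peskinPhi ((h * (k : ℝ) - X j) / ω))]
  -- bounds on the three factors
  have hcard : ∀ j : Fin 3, ((K j).card : ℝ) = 2 * (N : ℝ) := by
    intro j
    rw [hKdef]
    simp only [Int.card_Icc]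
    rw [show n j + N + 1 - (n j + 1 - N) = 2 * N by ring]
    norm_cast
    omega
  have hFb : ∀ j : Fin 3, j ≠ i →
      |∑ k ∈ K j, (if j = i
          then h * ((h * (k : ℝ) - X j) * peskinPhi ((h * (k : ℝ) - X j) / ω))
          else h * peskinPhi ((h * (k : ℝ) - X j) / ω))| ≤ 8 * ω := by
    intro j hji
    have hterm : ∀ k ∈ K j, |(if j = i
          then h * ((h * (k : ℝ) - X j) * peskinPhi ((h * (k : ℝ) - X j) / ω))
          else h * peskinPhi ((h * (k : ℝ) - X j) / ω))| ≤ h := by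
      intro k _
      rw [if_neg hji, abs_mul, abs_of_pos hh0]
      calc h * |peskinPhi ((h * (k : ℝ) - X j) / ω)| ≤ h * 1 :=
          mul_le_mul_of_nonneg_left (abs_peskinPhi_le_one _) hh0.le
      _ = h := mul_one h
    calc |∑ k ∈ K j, _| ≤ ∑ k ∈ K j, |(if j = i
            then h * ((h * (k : ℝ) - X j) * peskinPhi ((h * (k : ℝ) - X j) / ω))
            else h * peskinPhi ((h * (k : ℝ) - X j) / ω))| := Finset.abs_sum_le_sum_abs _ _
    _ ≤ (K j).card • h := Finset.sum_le_card_nsmul _ _ _ hterm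
    _ = ((K j).card : ℝ) * h := nsmul_eq_mul _ _
    _ = 2 * (N : ℝ) * h := by rw [hcard j]
    _ ≤ 8 * ω := by nlinarith
  have hGb : |∑ k ∈ K i, (if i = i
        then h * ((h * (k : ℝ) - X i) * peskinPhi ((h * (k : ℝ) - X i) / ω))
        else h * peskinPhi ((h * (k : ℝ) - X i) / ω))| ≤ 4 * ω * ε' := by
    have hrw : ∀ k ∈ K i, (if i = i
          then h * ((h * (k : ℝ) - X i) * peskinPhi ((h * (k : ℝ) - X i) / ω))
          else h * peskinPhi ((h * (k : ℝ) - X i) / ω))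
        = h * ((h * (k : ℝ) - X i) * peskinPhi ((h * (k : ℝ) - X i) / ω)) := by
      intro k _; rw [if_pos rfl]
    rw [Finset.sum_congr rfl hrw, ← Finset.mul_sum, abs_mul, abs_of_pos hh0]
    have hbd := odd_pair_sum_bound ω (X i) hmod hh0 hhδ hN0
    calc h * |∑ k ∈ K i, (h * (k : ℝ) - X i) * peskinPhi ((h * (k : ℝ) - X i) / ω)|
        ≤ h * ((N : ℝ) * ε') := mul_le_mul_of_nonneg_left hbd hh0.le
    _ ≤ 4 * ω * ε' := by nlinarith
  -- combine
  rw [Real.norm_eq_abs, abs_mul, Finset.abs_prod, abs_of_pos (by positivity : (0:ℝ) < ω⁻¹ ^ 3)]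
  have hprodsplit := Finset.mul_prod_erase Finset.univ
    (fun j => |∑ k ∈ K j, (if j = i
        then h * ((h * (k : ℝ) - X j) * peskinPhi ((h * (k : ℝ) - X j) / ω))
        else h * peskinPhi ((h * (k : ℝ) - X j) / ω))|) (Finset.mem_univ i)
  rw [← hprodsplit]
  have hrest : ∏ j ∈ Finset.univ.erase i, |∑ k ∈ K j, (if j = i
        then h * ((h * (k : ℝ) - X j) * peskinPhi ((h * (k : ℝ) - X j) / ω))
        else h * peskinPhi ((h * (k : ℝ) - X j) / ω))| ≤ (8 * ω) ^ 2 := by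
    calc ∏ j ∈ Finset.univ.erase i, |∑ k ∈ K j, (if j = i
          then h * ((h * (k : ℝ) - X j) * peskinPhi ((h * (k : ℝ) - X j) / ω))
          else h * peskinPhi ((h * (k : ℝ) - X j) / ω))|
        ≤ ∏ _j ∈ Finset.univ.erase i, (8 * ω) :=
          Finset.prod_le_prod (fun _ _ => abs_nonneg _)
            (fun j hj => hFb j (Finset.ne_of_mem_erase hj))
    _ = (8 * ω) ^ 2 := by
        rw [Finset.prod_const]
        congr 1
        simp [Finset.card_erase_of_mem]
  calc ω⁻¹ ^ 3 * (|∑ k ∈ K i, (if i = i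
          then h * ((h * (k : ℝ) - X i) * peskinPhi ((h * (k : ℝ) - X i) / ω))
          else h * peskinPhi ((h * (k : ℝ) - X i) / ω))|
        * ∏ j ∈ Finset.univ.erase i, |∑ k ∈ K j, (if j = i
          then h * ((h * (k : ℝ) - X j) * peskinPhi ((h * (k : ℝ) - X j) / ω))
          else h * peskinPhi ((h * (k : ℝ) - X j) / ω))|)
      ≤ ω⁻¹ ^ 3 * (4 * ω * ε' * (8 * ω) ^ 2) := by
        apply mul_le_mul_of_nonneg_left _ (by positivity)
        exact mul_le_mul hGb hrest (Finset.prod_nonneg fun _ _ => abs_nonneg _) (by positivity)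
  _ = 256 * ε' := by field_simp; ring
  _ < ε := by rw [hε'def]; linarith
end

section
/- Analytic solution of the oscillatory shear (Stokes) problem: let ρ, μ, ν, y_L > 0 and set k = √(νρ/(2μ)). Define w(y) = sinh(k·y·(1+i))/sinh(k·y_L·(1+i)) ∈ ℂ and u(y,t) = |w(y)|·sin(ν·t + arg w(y)), which equals Im(w(y)·e^{iνt}). Then u satisfies ρ·∂u/∂t(y,t) = μ·∂²u/∂y²(y,t) for all (y,t) ∈ ℝ², together with the boundary conditions u(0,t) = 0 and u(y_L,t) = sin(ν·t) for all t. -/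
open Complex

private lemma hasDerivAt_im {f : ℝ → ℂ} {f' : ℂ} {x : ℝ} (h : HasDerivAt f f' x) :
    HasDerivAt (fun x => (f x).im) f'.im x := by
  have := (Complex.imCLM.hasFDerivAt.comp x h.hasFDerivAt).hasDerivAt
  simp at this
  exact this

private lemma im_mul_exp (z : ℂ) (θ : ℝ) :
    (z * Complex.exp (Complex.I * θ)).im = ‖z‖ * Real.sin (θ + Complex.arg z) := by
  rcases eq_or_ne z 0 with h | h
  · simp [h]
  · have habs : ‖z‖ ≠ 0 := norm_ne_zero_iff.mpr h
    have hre : z.re = ‖z‖ * Real.cos (Complex.arg z) := by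
      rw [Complex.cos_arg h, mul_div_cancel₀ _ habs]
    have him : z.im = ‖z‖ * Real.sin (Complex.arg z) := by
      rw [Complex.sin_arg, mul_div_cancel₀ _ habs]
    rw [Real.sin_add, Complex.mul_im]
    have h1 : (Complex.exp (Complex.I * θ)).re = Real.cos θ := by
      simp [Complex.exp_re]
    have h2 : (Complex.exp (Complex.I * θ)).im = Real.sin θ := by
      simp [Complex.exp_im]
    rw [h1, h2, hre, him]; ring

/-- Analytic solution of the oscillatory shear (Stokes) problem: with
`k = √(νρ/(2μ))`, `w(y) = sinh(k·y·(1+i))/sinh(k·y_L·(1+i))`, and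
`u(y,t) = |w(y)|·sin(ν·t + arg w(y))` (which equals `Im(w(y)·e^{iνt})`),
the function `u` satisfies `ρ·∂u/∂t = μ·∂²u/∂y²` for all `(y,t)`, with boundary
conditions `u(0,t) = 0` and `u(y_L,t) = sin(ν·t)`. -/
theorem oscillatory_shear_solution (ρ μ ν yL : ℝ)
    (hρ : 0 < ρ) (hμ : 0 < μ) (hν : 0 < ν) (hyL : 0 < yL)
    (k : ℝ) (hk : k = Real.sqrt (ν * ρ / (2 * μ)))
    (w : ℝ → ℂ)
    (hw : ∀ y : ℝ, w y =
      Complex.sinh ((k : ℂ) * y * (1 + Complex.I)) /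
        Complex.sinh ((k : ℂ) * yL * (1 + Complex.I)))
    (u : ℝ → ℝ → ℝ)
    (hu : ∀ y t : ℝ, u y t = ‖w y‖ * Real.sin (ν * t + Complex.arg (w y))) :
    (∀ y t : ℝ, u y t = (w y * Complex.exp (Complex.I * (ν * t))).im) ∧
    (∀ y t : ℝ,
      ρ * deriv (fun s => u y s) t = μ * deriv (deriv (fun z => u z t)) y) ∧
    (∀ t : ℝ, u 0 t = 0) ∧
    (∀ t : ℝ, u yL t = Real.sin (ν * t)) := by
  have hk0 : 0 < k := by
    rw [hk]; exact Real.sqrt_pos.mpr (by positivity)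
  have hk2 : k ^ 2 = ν * ρ / (2 * μ) := by
    rw [hk, Real.sq_sqrt (by positivity)]
  set a : ℂ := (k : ℂ) * (1 + Complex.I) with ha
  have haz : ∀ z : ℝ, (k : ℂ) * z * (1 + Complex.I) = a * z := by
    intro z; rw [ha]; ring
  set C : ℂ := Complex.sinh ((k : ℂ) * yL * (1 + Complex.I)) with hCdef
  -- C ≠ 0
  have hC : C ≠ 0 := by
    intro h
    have hz : Complex.exp ((k : ℂ) * yL * (1 + Complex.I))
        = Complex.exp (-((k : ℂ) * yL * (1 + Complex.I))) := by
      have h2 := h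
      rw [hCdef, Complex.sinh, div_eq_zero_iff] at h2
      have h3 : Complex.exp ((k : ℂ) * yL * (1 + Complex.I))
          - Complex.exp (-((k : ℂ) * yL * (1 + Complex.I))) = 0 := by
        rcases h2 with h' | h'
        · exact h'
        · norm_num at h'
      exact sub_eq_zero.mp h3
    have hone : Complex.exp (2 * ((k : ℂ) * yL * (1 + Complex.I))) = 1 := by
      rw [two_mul, Complex.exp_add]
      nth_rewrite 1 [hz]
      rw [← Complex.exp_add]
      simp
    obtain ⟨n, hn⟩ := Complex.exp_eq_one_iff.mp hone
    have hre := congrArg Complex.re hn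
    simp [Complex.mul_re, Complex.mul_im] at hre
    rcases hre with h' | h' <;> linarith
  -- Part 1
  have part1 : ∀ y t : ℝ, u y t = (w y * Complex.exp (Complex.I * (ν * t))).im := by
    intro y t
    rw [hu]
    have := im_mul_exp (w y) (ν * t)
    rw [← this]
    push_cast
    ring_nf
  -- derivative helpers
  have hsinh : ∀ z : ℝ, HasDerivAt (fun z : ℝ => Complex.sinh (a * z))
      (a * Complex.cosh (a * z)) z := by
    intro z
    have hi : HasDerivAt (fun w : ℂ => a * w) a (z : ℂ) := by
      simpa using (hasDerivAt_id (z : ℂ)).const_mul a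
    have := (Complex.hasDerivAt_sinh (a * (z : ℂ))).comp (z : ℂ) hi
    simpa [mul_comm] using this.comp_ofReal
  have hcosh : ∀ z : ℝ, HasDerivAt (fun z : ℝ => Complex.cosh (a * z))
      (a * Complex.sinh (a * z)) z := by
    intro z
    have hi : HasDerivAt (fun w : ℂ => a * w) a (z : ℂ) := by
      simpa using (hasDerivAt_id (z : ℂ)).const_mul a
    have := (Complex.hasDerivAt_cosh (a * (z : ℂ))).comp (z : ℂ) hi
    simpa [mul_comm] using this.comp_ofReal
  have hExp : ∀ s : ℝ, HasDerivAt (fun s : ℝ => Complex.exp (Complex.I * (↑ν * ↑s)))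
      (Complex.I * ν * Complex.exp (Complex.I * (↑ν * ↑s))) s := by
    intro s
    have hi : HasDerivAt (fun z : ℂ => Complex.I * ((ν : ℂ) * z)) (Complex.I * ν) (s : ℂ) := by
      simpa [mul_assoc] using (hasDerivAt_id (s : ℂ)).const_mul (Complex.I * (ν : ℂ))
    have := (Complex.hasDerivAt_exp (Complex.I * ((ν : ℂ) * (s : ℂ)))).comp (s : ℂ) hi
    simpa [mul_comm] using this.comp_ofReal
  refine ⟨part1, ?_, ?_, ?_⟩
  · -- PDE
    intro y t
    set E : ℂ := Complex.exp (Complex.I * (↑ν * ↑t)) with hE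
    -- time derivative
    have hut : deriv (fun s => u y s) t = (w y * (Complex.I * ν * E)).im := by
      have hfun : (fun s => u y s) = fun s : ℝ =>
          (w y * Complex.exp (Complex.I * (↑ν * ↑s))).im := by
        funext s; exact part1 y s
      rw [hfun]
      exact (hasDerivAt_im (((hExp t)).const_mul (w y))).deriv
    -- space derivatives
    have hfun2 : (fun z => u z t) = fun z : ℝ =>
        ((E / C) * Complex.sinh (a * z)).im := by
      funext z
      rw [part1 z t, hw z, haz]
      rw [← hE]
      ring_nf
    have hderiv1 : deriv (fun z => u z t) = fun z : ℝ =>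
        ((E / C * a) * Complex.cosh (a * z)).im := by
      funext z
      rw [hfun2]
      have := (hasDerivAt_im ((hsinh z).const_mul (E / C))).deriv
      rw [this]; ring_nf
    have hderiv2 : deriv (deriv (fun z => u z t)) y =
        ((E / C * a) * (a * Complex.sinh (a * y))).im := by
      rw [hderiv1]
      exact (hasDerivAt_im ((hcosh y).const_mul (E / C * a))).deriv
    rw [hut, hderiv2]
    -- reduce to complex identity
    have key : (ρ : ℂ) * (Complex.I * ν) = (μ : ℂ) * a ^ 2 := by
      have hk2c : ((k : ℂ)) ^ 2 * (2 * (μ : ℂ)) = (ν : ℂ) * (ρ : ℂ) := by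
        have : k ^ 2 * (2 * μ) = ν * ρ := by
          rw [hk2]; field_simp
        exact_mod_cast this
      have hsq : (1 + Complex.I) ^ 2 = 2 * Complex.I := by
        rw [add_sq, Complex.I_sq]; ring
      rw [ha, mul_pow, hsq]
      linear_combination -Complex.I * hk2c
    have hL : ρ * (w y * (Complex.I * ν * E)).im
        = ((ρ : ℂ) * (w y * (Complex.I * ν * E))).im := by
      simp [Complex.mul_im]
    have hR : μ * ((E / C * a) * (a * Complex.sinh (a * y))).im
        = ((μ : ℂ) * ((E / C * a) * (a * Complex.sinh (a * y)))).im := by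
      simp [Complex.mul_im]
    rw [hL, hR]
    congr 1
    rw [hw y, haz]
    field_simp
    linear_combination (Complex.sinh (a * (y : ℂ)) * E) * key
  · -- u 0 t = 0
    intro t
    have hw0 : w 0 = 0 := by
      rw [hw]; simp [← hCdef]
    rw [hu, hw0]; simp
  · -- u yL t = sin (ν t)
    intro t
    have hwL : w yL = 1 := by
      rw [hw, ← hCdef, div_self hC]
    rw [hu, hwL]; simp
end

section
/- Rotation period of an ellipsoidal aggregate in simple shear (Blaser's formula): let a₁, a₂, τ > 0 and let θ : ℝ → ℝ be differentiable and satisfy the Jeffery orbit equation θ′(t) = τ·(a₁²·cos²θ(t) + a₂²·sin²θ(t))/(a₁² + a₂²) for all t ∈ ℝ. Then θ advances by exactly one full revolution over each interval of length T = 2π(a₁² + a₂²)/(a₁·a₂·τ); that is, θ(t + T) = θ(t) + 2π for all t ∈ ℝ. -/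
open Real

lemma jeffery_pos_comb {a b s c : ℝ} (ha : 0 < a) (hb : 0 < b) (h : s ^ 2 + c ^ 2 = 1) :
    0 < a * c ^ 2 + b * s ^ 2 := by
  rcases le_total a b with hab | hab
  · nlinarith [sq_nonneg s, sq_nonneg c]
  · nlinarith [sq_nonneg s, sq_nonneg c]

lemma jeffery_aux_deriv (a b : ℝ) (ha : 0 < a) (hb : 0 < b) (φ : ℝ) :
    HasDerivAt (fun x : ℝ => x + Real.arctan ((b - a) * Real.sin x * Real.cos x /
      (a * Real.cos x ^ 2 + b * Real.sin x ^ 2)))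
      (a * b / (a ^ 2 * Real.cos φ ^ 2 + b ^ 2 * Real.sin φ ^ 2)) φ := by
  have hpy := Real.sin_sq_add_cos_sq φ
  have hD : 0 < a * Real.cos φ ^ 2 + b * Real.sin φ ^ 2 := jeffery_pos_comb ha hb hpy
  have hD2 : 0 < a ^ 2 * Real.cos φ ^ 2 + b ^ 2 * Real.sin φ ^ 2 :=
    jeffery_pos_comb (pow_pos ha 2) (pow_pos hb 2) hpy
  have hN : HasDerivAt (fun x : ℝ => (b - a) * Real.sin x * Real.cos x)
      ((b - a) * Real.cos φ * Real.cos φ + (b - a) * Real.sin φ * (-Real.sin φ)) φ := by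
    exact (((Real.hasDerivAt_sin φ).const_mul (b - a)).mul (Real.hasDerivAt_cos φ))
  have hDen : HasDerivAt (fun x : ℝ => a * Real.cos x ^ 2 + b * Real.sin x ^ 2)
      (a * (2 * Real.cos φ * -Real.sin φ) + b * (2 * Real.sin φ * Real.cos φ)) φ := by
    exact (((Real.hasDerivAt_cos φ).pow 2).const_mul a).add
      (((Real.hasDerivAt_sin φ).pow 2).const_mul b) |>.congr_deriv (by ring)
  have hq := hN.div hDen hD.ne'
  have harc := (Real.hasDerivAt_arctan _).comp φ hq
  have h := (hasDerivAt_id φ).add harc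
  convert h using 1
  any_goals rfl
  simp only [Pi.div_apply]
  have key : (a * Real.cos φ ^ 2 + b * Real.sin φ ^ 2) ^ 2 + ((b - a) * Real.sin φ * Real.cos φ) ^ 2
      = a ^ 2 * Real.cos φ ^ 2 + b ^ 2 * Real.sin φ ^ 2 := by
    linear_combination (a ^ 2 * Real.cos φ ^ 2 + b ^ 2 * Real.sin φ ^ 2) * hpy
  have hX : ((b - a) * Real.cos φ * Real.cos φ + (b - a) * Real.sin φ * (-Real.sin φ)) *
      (a * Real.cos φ ^ 2 + b * Real.sin φ ^ 2) - (b - a) * Real.sin φ * Real.cos φ *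
      (a * (2 * Real.cos φ * -Real.sin φ) + b * (2 * Real.sin φ * Real.cos φ))
      = a * b - (a ^ 2 * Real.cos φ ^ 2 + b ^ 2 * Real.sin φ ^ 2) := by
    linear_combination ((b - a) * (a * Real.cos φ ^ 2 - b * Real.sin φ ^ 2) + a * b) * hpy
  have h1 : 1 + ((b - a) * Real.sin φ * Real.cos φ / (a * Real.cos φ ^ 2 + b * Real.sin φ ^ 2)) ^ 2
      = (a ^ 2 * Real.cos φ ^ 2 + b ^ 2 * Real.sin φ ^ 2) / (a * Real.cos φ ^ 2 + b * Real.sin φ ^ 2) ^ 2 := by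
    rw [← key]
    field_simp
  rw [h1, hX]
  field_simp
  ring
/-- Rotation period of an ellipsoidal aggregate in simple shear (Blaser's formula): if
`θ` satisfies the Jeffery orbit equation
`θ′(t) = τ·(a₁²·cos²θ + a₂²·sin²θ)/(a₁² + a₂²)`, then `θ` advances by exactly one
full revolution over each interval of length `T = 2π(a₁² + a₂²)/(a₁·a₂·τ)`. -/
theorem jeffery_orbit_period (a₁ a₂ τ : ℝ) (ha₁ : 0 < a₁) (ha₂ : 0 < a₂) (hτ : 0 < τ)
    (θ : ℝ → ℝ) (hθ : Differentiable ℝ θ)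
    (hode : ∀ t : ℝ, deriv θ t =
      τ * (a₁ ^ 2 * Real.cos (θ t) ^ 2 + a₂ ^ 2 * Real.sin (θ t) ^ 2) / (a₁ ^ 2 + a₂ ^ 2)) :
    ∀ t : ℝ,
      θ (t + 2 * Real.pi * (a₁ ^ 2 + a₂ ^ 2) / (a₁ * a₂ * τ)) = θ t + 2 * Real.pi := by
  intro t
  set C : ℝ := (a₁ ^ 2 + a₂ ^ 2) / (a₁ * a₂ * τ) with hC
  have hCpos : 0 < C := by positivity
  set g : ℝ → ℝ := fun φ => C * (φ + Real.arctan ((a₂ - a₁) * Real.sin φ * Real.cos φ /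
      (a₁ * Real.cos φ ^ 2 + a₂ * Real.sin φ ^ 2))) with hgdef
  have hg : ∀ φ, HasDerivAt g
      (C * (a₁ * a₂ / (a₁ ^ 2 * Real.cos φ ^ 2 + a₂ ^ 2 * Real.sin φ ^ 2))) φ :=
    fun φ => (jeffery_aux_deriv a₁ a₂ ha₁ ha₂ φ).const_mul C
  have hD2 : ∀ φ : ℝ, 0 < a₁ ^ 2 * Real.cos φ ^ 2 + a₂ ^ 2 * Real.sin φ ^ 2 :=
    fun φ => jeffery_pos_comb (pow_pos ha₁ 2) (pow_pos ha₂ 2) (Real.sin_sq_add_cos_sq φ)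
  have hgmono : StrictMono g := by
    apply strictMono_of_deriv_pos
    intro φ
    rw [(hg φ).deriv]
    have := hD2 φ
    positivity
  -- the function u t = g (θ t) - t has zero derivative
  have hu : ∀ s : ℝ, HasDerivAt (fun x => g (θ x) - x) 0 s := by
    intro s
    have hcomp := ((hg (θ s)).comp s (hθ s).hasDerivAt).sub (hasDerivAt_id s)
    convert hcomp using 1
    any_goals rfl
    rw [hode s]
    have hd := (hD2 (θ s)).ne'
    have hsum : (0:ℝ) < a₁ ^ 2 + a₂ ^ 2 := by positivity
    rw [hC]
    field_simp
    ring
  have hconst : (fun x => g (θ x) - x) (t + 2 * Real.pi * (a₁ ^ 2 + a₂ ^ 2) / (a₁ * a₂ * τ))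
      = (fun x => g (θ x) - x) t :=
    is_const_of_deriv_eq_zero (fun x => (hu x).differentiableAt)
      (fun x => (hu x).deriv) _ _
  have hT : 2 * Real.pi * (a₁ ^ 2 + a₂ ^ 2) / (a₁ * a₂ * τ) = 2 * Real.pi * C := by
    rw [hC]; ring
  have hper : g (θ t + 2 * Real.pi) = g (θ t) + 2 * Real.pi * C := by
    simp only [hgdef, Real.sin_add_two_pi, Real.cos_add_two_pi]
    ring
  apply hgmono.injective
  have : g (θ (t + 2 * Real.pi * (a₁ ^ 2 + a₂ ^ 2) / (a₁ * a₂ * τ)))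
      = g (θ t) + 2 * Real.pi * C := by
    have := hconst
    simp only at this
    linarith [this, hT]
  rw [this, hper]
end
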